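/- The Lyapunov function H of parallel asynchronous coordinate descent is decreasing: let q ≥ 1 be an integer, suppose f is differentiable with coordinatewise Lipschitz constants L_{jk} (i.e., |∇_k f(x + r·e_j) − ∇_k f(x)| ≤ L_{jk}·|r| for all x, r), let L_max := max_{j,k} L_{jk} > 0, and let Γ ≥ 4·q·L_max. Let (x^t)_{t≥0} satisfy x^t = x^{t−1} + d^t·e_{k_t} with d^t := d̂(g̃^t, x^{t−1}_{k_t}, Γ, Ψ_{k_t}), where g̃^t = ∇_{k_t} f(x̃^t) for some vector x̃^t whose coordinates are inconsistent reads of the recent past: for every coordinate k there exists s with max{0, t−q−1} ≤ s ≤ t−1 and x̃^t_k = x^s_k. Define A(t) := (Γ/16)·Σ_{τ=max{1, t−q}}^{t} ((τ + q − t)/q)·(d^τ)² and H(t) := F(x^t) + A(t). Then H(t) ≤ H(t−1) for every t ≥ 1. -/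

import Mathlib

open Set

set_option maxHeartbeats 1000000


/-- The proximal function `W(d, g, x, Γ, Ψ) = -g·d - (Γ/2)·d² + Ψ(x) - Ψ(x + d)`. -/
noncomputable def W (d g x Γ : ℝ) (Ψ : ℝ → ℝ) : ℝ :=
  -(g * d) - Γ / 2 * d ^ 2 + Ψ x - Ψ (x + d)

/-- The `j`-th partial derivative (coordinate of the gradient) of `f` at `x`. -/
noncomputable def grad {n : ℕ} (f : (Fin n → ℝ) → ℝ) (x : Fin n → ℝ) (j : Fin n) : ℝ :=
  fderiv ℝ f x (Pi.single j 1)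

lemma tangent_line {φ : ℝ → ℝ} (hc : ConvexOn ℝ Set.univ φ) {a b φ' : ℝ}
    (hd : HasDerivAt φ φ' a) : φ a + φ' * (b - a) ≤ φ b := by
  rcases lt_trichotomy a b with h | rfl | h
  · have h1 := hc.le_slope_of_hasDerivAt (mem_univ a) (mem_univ b) h hd
    rw [slope_def_field, le_div_iff₀ (by linarith : (0:ℝ) < b - a)] at h1
    nlinarith
  · simp
  · have h1 := hc.slope_le_of_hasDerivAt (mem_univ b) (mem_univ a) h hd
    rw [slope_def_field, div_le_iff₀ (by linarith : (0:ℝ) < a - b)] at h1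
    nlinarith

lemma hasDerivAt_line {n : ℕ} {f : (Fin n → ℝ) → ℝ} (hf : Differentiable ℝ f)
    (x v : Fin n → ℝ) (r : ℝ) :
    HasDerivAt (fun s : ℝ => f (x + s • v)) (fderiv ℝ f (x + r • v) v) r := by
  have h1 : HasDerivAt (fun s : ℝ => x + s • v) v r := by
    simpa using ((hasDerivAt_id r).smul_const v).const_add x
  exact ((hf (x + r • v)).hasFDerivAt.comp_hasDerivAt r h1)

lemma line_convex {n : ℕ} {f : (Fin n → ℝ) → ℝ} (hfc : ConvexOn ℝ Set.univ f)
    (x v : Fin n → ℝ) : ConvexOn ℝ Set.univ (fun s : ℝ => f (x + s • v)) := by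
  have h := hfc.comp_affineMap (AffineMap.lineMap x (x + v))
  have he : (fun s : ℝ => f (x + s • v)) = f ∘ (AffineMap.lineMap x (x + v)) := by
    funext s
    simp [AffineMap.lineMap_apply, add_comm]
  rw [he]
  simpa using h

lemma quad_bound {n : ℕ} {f : (Fin n → ℝ) → ℝ} (hf : Differentiable ℝ f)
    (hfc : ConvexOn ℝ Set.univ f) (k : Fin n) {Lk : ℝ}
    (hLk : ∀ (y : Fin n → ℝ) (r : ℝ),
      |grad f (y + r • (Pi.single k 1 : Fin n → ℝ)) k - grad f y k| ≤ Lk * |r|)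
    (x : Fin n → ℝ) (D : ℝ) :
    f (x + D • (Pi.single k 1 : Fin n → ℝ)) ≤ f x + grad f x k * D + 3/4 * Lk * D^2 := by
  set v : Fin n → ℝ := Pi.single k 1 with hv
  set φ : ℝ → ℝ := fun s => f (x + s • v) with hφ
  have hconv : ConvexOn ℝ Set.univ φ := line_convex hfc x v
  have hG : ∀ r : ℝ, HasDerivAt φ (grad f (x + r • v) k) r := fun r =>
    hasDerivAt_line hf x v r
  have hφ0 : φ 0 = f x := by simp [hφ]
  have t1 : φ D + grad f (x + D • v) k * (D/2 - D) ≤ φ (D/2) := tangent_line hconv (hG D)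
  have t2 : φ (D/2) + grad f (x + (D/2) • v) k * (0 - D/2) ≤ φ 0 := tangent_line hconv (hG (D/2))
  have hb1 : |grad f (x + D • v) k - grad f x k| ≤ Lk * |D| := hLk x D
  have hb2 : |grad f (x + (D/2) • v) k - grad f x k| ≤ Lk * (|D|/2) := by
    have := hLk x (D/2)
    have habs : |D/2| = |D|/2 := by rw [abs_div]; norm_num
    rw [habs] at this; exact this
  set a1 := grad f (x + D • v) k - grad f x k with ha1
  set a2 := grad f (x + (D/2) • v) k - grad f x k with ha2
  have e1 : a1 * D ≤ Lk * D^2 := by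
    calc a1 * D ≤ |a1 * D| := le_abs_self _
      _ = |a1| * |D| := abs_mul _ _
      _ ≤ (Lk * |D|) * |D| := mul_le_mul_of_nonneg_right hb1 (abs_nonneg D)
      _ = Lk * D^2 := by rw [mul_assoc, abs_mul_abs_self]; ring
  have e2 : a2 * D ≤ Lk * D^2 / 2 := by
    calc a2 * D ≤ |a2 * D| := le_abs_self _
      _ = |a2| * |D| := abs_mul _ _
      _ ≤ (Lk * (|D|/2)) * |D| := mul_le_mul_of_nonneg_right hb2 (abs_nonneg D)
      _ = Lk * D^2 / 2 := by
          have : |D| * |D| = D^2 := by rw [abs_mul_abs_self]; ring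
          linear_combination (Lk/2) * this
  have hgoal : φ D ≤ f x + grad f x k * D + 3/4 * Lk * D^2 := by
    have ha1e : grad f (x + D • v) k = grad f x k + a1 := by rw [ha1]; ring
    have ha2e : grad f (x + (D/2) • v) k = grad f x k + a2 := by rw [ha2]; ring
    rw [ha1e] at t1; rw [ha2e] at t2; rw [hφ0] at t2
    clear_value a1 a2 φ
    nlinarith [t1, t2, e1, e2]
  exact hgoal

lemma grad_err {n : ℕ} {f : (Fin n → ℝ) → ℝ} {L : Fin n → Fin n → ℝ} {Lmax : ℝ}
    (hL : ∀ (j k : Fin n) (x : Fin n → ℝ) (r : ℝ),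
      |grad f (x + r • (Pi.single j 1 : Fin n → ℝ)) k - grad f x k| ≤ L j k * |r|)
    (hub : ∀ j k, L j k ≤ Lmax) (y z : Fin n → ℝ) (k : Fin n) :
    |grad f y k - grad f z k| ≤ Lmax * ∑ c, |y c - z c| := by
  have key : ∀ s : Finset (Fin n),
      |grad f (fun c => if c ∈ s then y c else z c) k - grad f z k|
        ≤ Lmax * ∑ c ∈ s, |y c - z c| := by
    intro s
    induction s using Finset.induction_on with
    | empty =>
      have hz : (fun c => if c ∈ (∅ : Finset (Fin n)) then y c else z c) = z := by
        funext c; simp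
      rw [hz]; simp
    | @insert a s ha ih =>
      have hfun : (fun c => if c ∈ insert a s then y c else z c)
          = (fun c => if c ∈ s then y c else z c) + (y a - z a) • (Pi.single a 1 : Fin n → ℝ) := by
        funext c
        by_cases hc : c = a
        · subst hc; simp [ha]
        · simp [hc, Pi.single_eq_of_ne hc]
      calc |grad f (fun c => if c ∈ insert a s then y c else z c) k - grad f z k|
          ≤ |grad f (fun c => if c ∈ insert a s then y c else z c) k
              - grad f (fun c => if c ∈ s then y c else z c) k|
            + |grad f (fun c => if c ∈ s then y c else z c) k - grad f z k| :=
            abs_sub_le _ _ _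
        _ ≤ L a k * |y a - z a| + Lmax * ∑ c ∈ s, |y c - z c| := by
            refine add_le_add ?_ ih
            rw [hfun]
            exact hL a k _ _
        _ ≤ Lmax * |y a - z a| + Lmax * ∑ c ∈ s, |y c - z c| := by
            have := mul_le_mul_of_nonneg_right (hub a k) (abs_nonneg (y a - z a))
            linarith
        _ = Lmax * ∑ c ∈ insert a s, |y c - z c| := by
            rw [Finset.sum_insert ha, mul_add]
  have huniv := key Finset.univ
  have : (fun c => if c ∈ (Finset.univ : Finset (Fin n)) then y c else z c) = y := by
    funext c; simp
  rwa [this] at huniv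

lemma tele {n : ℕ} (x : ℕ → Fin n → ℝ) (idx : ℕ → Fin n) (d : ℕ → ℝ)
    (hx : ∀ t : ℕ, 1 ≤ t →
      x t = x (t - 1) + d t • (Pi.single (idx t) 1 : Fin n → ℝ))
    (c : Fin n) :
    ∀ a b : ℕ, a ≤ b →
      x b c - x a c = ∑ τ ∈ Finset.Icc (a+1) b, (if c = idx τ then d τ else 0) := by
  intro a b hab
  induction b, hab using Nat.le_induction with
  | base => rw [Finset.Icc_eq_empty (by omega)]; simp
  | succ b hab ih =>
    have hstep : x (b+1) c - x b c = (if c = idx (b+1) then d (b+1) else 0) := by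
      have h := hx (b+1) (by omega)
      simp only [Nat.add_sub_cancel] at h
      rw [h]
      simp [Pi.single_apply, mul_ite]
    rw [Finset.sum_Icc_succ_top (by omega : a+1 ≤ b+1), ← ih]
    linarith

/-- The Lyapunov function `H` of parallel asynchronous coordinate descent is
decreasing: with coordinatewise Lipschitz constants `L j k`, `L_max = max L > 0`,
`Γ ≥ 4·q·L_max`, updates `x^t = x^{t-1} + d^t·e_{k_t}` where
`d^t = d̂(g̃^t, x^{t-1}_{k_t}, Γ, Ψ_{k_t})` and `g̃^t = ∇_{k_t} f(x̃^t)` for an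
inconsistent read `x̃^t` (each coordinate read from some time in
`[max{0, t-q-1}, t-1]`), and
`A(t) = (Γ/16)·Σ_{τ=max{1,t-q}}^{t} ((τ+q-t)/q)·(d^τ)²`,
the function `H(t) = F(x^t) + A(t)` satisfies `H(t) ≤ H(t-1)` for all `t ≥ 1`. -/
theorem pacd_H_decreasing {n : ℕ} (hn : 0 < n) (q : ℕ) (hq : 1 ≤ q)
    (f : (Fin n → ℝ) → ℝ) (hf : Differentiable ℝ f) (hfc : ConvexOn ℝ Set.univ f)
    (L : Fin n → Fin n → ℝ)
    (hL : ∀ (j k : Fin n) (x : Fin n → ℝ) (r : ℝ),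
      |grad f (x + r • (Pi.single j 1 : Fin n → ℝ)) k - grad f x k| ≤ L j k * |r|)
    (Lmax : ℝ) (hLmax_mem : ∃ j k, Lmax = L j k) (hLmax_ub : ∀ j k, L j k ≤ Lmax)
    (hLmax_pos : 0 < Lmax)
    (Ψ : Fin n → ℝ → ℝ) (hΨ : ∀ k, ConvexOn ℝ Set.univ (Ψ k))
    (F : (Fin n → ℝ) → ℝ) (hF : ∀ y, F y = f y + ∑ k, Ψ k (y k))
    (Γ : ℝ) (hΓ : Γ ≥ 4 * q * Lmax)
    (x xtilde : ℕ → Fin n → ℝ) (idx : ℕ → Fin n) (d gtilde : ℕ → ℝ)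
    (hread : ∀ t : ℕ, 1 ≤ t → ∀ c : Fin n,
      ∃ s : ℕ, t - q - 1 ≤ s ∧ s ≤ t - 1 ∧ xtilde t c = x s c)
    (hg : ∀ t : ℕ, 1 ≤ t → gtilde t = grad f (xtilde t) (idx t))
    (hd : ∀ t : ℕ, 1 ≤ t →
      IsMaxOn (fun a : ℝ => W a (gtilde t) (x (t - 1) (idx t)) Γ (Ψ (idx t)))
        Set.univ (d t))
    (hx : ∀ t : ℕ, 1 ≤ t →
      x t = x (t - 1) + d t • (Pi.single (idx t) 1 : Fin n → ℝ))
    (A H : ℕ → ℝ)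
    (hA : ∀ t, A t =
      Γ / 16 * ∑ τ ∈ Finset.Icc (max 1 (t - q)) t, ((τ + q - t : ℕ) : ℝ) / q * d τ ^ 2)
    (hH : ∀ t, H t = F (x t) + A t) :
    ∀ t : ℕ, 1 ≤ t → H t ≤ H (t - 1) := by
  intro t ht
  obtain ⟨m, rfl⟩ : ∃ m, t = m + 1 := ⟨t - 1, by omega⟩
  simp only [Nat.add_sub_cancel]
  have hq1 : (1:ℝ) ≤ (q:ℝ) := by exact_mod_cast hq
  have hq0 : (0:ℝ) < (q:ℝ) := by linarith
  have hΓpos : 0 < Γ := lt_of_lt_of_le (by nlinarith) hΓ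
  have hLΓ : 4 * Lmax ≤ Γ := by nlinarith
  set k := idx (m+1) with hk
  set D := d (m+1) with hDdef
  set M : ℕ := max 1 (m + 1 - q) with hM
  set T : Finset ℕ := Finset.Icc M m with hT
  set s2 : ℝ := ∑ τ ∈ T, d τ ^ 2 with hs2
  set S : ℝ := ∑ τ ∈ T, |d τ| with hS
  have hM1 : 1 ≤ M := le_max_left _ _
  have hMq : m + 1 - q ≤ M := le_max_right _ _
  have hMt : M ≤ m + 1 := by omega
  have hcardT : (T.card : ℝ) ≤ (q : ℝ) := by
    have hc : T.card = m + 1 - M := by rw [hT, Nat.card_Icc]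
    have : T.card ≤ q := by omega
    exact_mod_cast this
  -- nonneg sums
  have hs2nn : 0 ≤ s2 := Finset.sum_nonneg fun i _ => sq_nonneg _
  -- Step A : A-difference bound
  have cA : A (m+1) - A m ≤ Γ/16 * D^2 - Γ/(16*q) * s2 := by
    have hAt : A (m+1)
        = Γ/16 * ((∑ τ ∈ T, ((τ + q - (m+1) : ℕ) : ℝ)/q * d τ^2) + D^2) := by
      rw [hA (m+1)]
      rw [Finset.sum_Icc_succ_top hMt]
      have hqq : ((m + 1 + q - (m+1) : ℕ) : ℝ) = (q : ℝ) := by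
        norm_cast; omega
      rw [hqq, div_self (ne_of_gt hq0), one_mul]
    have hcoef : ∀ τ ∈ T, ((τ + q - m : ℕ) : ℝ) = ((τ + q - (m+1) : ℕ) : ℝ) + 1 := by
      intro τ hτ
      rw [hT, Finset.mem_Icc] at hτ
      have h1 : m + 1 - q ≤ τ := le_trans hMq hτ.1
      have h2 : 1 ≤ τ := le_trans hM1 hτ.1
      have : (τ + q - m : ℕ) = (τ + q - (m+1) : ℕ) + 1 := by omega
      rw [this]; push_cast; ring
    have hAm : Γ/16 * ((∑ τ ∈ T, ((τ + q - (m+1) : ℕ) : ℝ)/q * d τ^2) + 1/q * s2)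
        ≤ A m := by
      rw [hA m]
      apply mul_le_mul_of_nonneg_left _ (by positivity : (0:ℝ) ≤ Γ/16)
      have hsub : T ⊆ Finset.Icc (max 1 (m - q)) m := by
        rw [hT]
        apply Finset.Icc_subset_Icc _ le_rfl
        apply max_le (le_max_left _ _)
        exact le_trans (by omega : m - q ≤ m + 1 - q) (le_max_right 1 (m + 1 - q))
      calc (∑ τ ∈ T, ((τ + q - (m+1) : ℕ) : ℝ)/q * d τ^2) + 1/q * s2
          = ∑ τ ∈ T, ((τ + q - m : ℕ) : ℝ)/q * d τ^2 := by
            rw [hs2, Finset.mul_sum, ← Finset.sum_add_distrib]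
            apply Finset.sum_congr rfl
            intro τ hτ
            rw [hcoef τ hτ]
            ring
        _ ≤ ∑ τ ∈ Finset.Icc (max 1 (m - q)) m, ((τ + q - m : ℕ) : ℝ)/q * d τ^2 := by
            apply Finset.sum_le_sum_of_subset_of_nonneg hsub
            intro i _ _
            positivity
    have hexp : Γ/16 * ((∑ τ ∈ T, ((τ + q - (m+1) : ℕ) : ℝ)/q * d τ^2) + 1/q * s2)
        = Γ/16 * (∑ τ ∈ T, ((τ + q - (m+1) : ℕ) : ℝ)/q * d τ^2) + Γ/(16*q) * s2 := by
      field_simp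
    rw [hAt]
    rw [hexp] at hAm
    have : Γ/16 * ((∑ τ ∈ T, ((τ + q - (m+1) : ℕ) : ℝ)/q * d τ^2) + D^2)
        = Γ/16 * (∑ τ ∈ T, ((τ + q - (m+1) : ℕ) : ℝ)/q * d τ^2) + Γ/16 * D^2 := by ring
    rw [this]
    linarith
  -- update equation
  have hxt : x (m+1) = x m + D • (Pi.single k 1 : Fin n → ℝ) := by
    have h := hx (m+1) (by omega)
    simpa using h
  -- Step B : gradient error bound
  have hEc : ∀ c : Fin n, |x m c - xtilde (m+1) c|
      ≤ ∑ τ ∈ T, (if c = idx τ then |d τ| else 0) := by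
    intro c
    obtain ⟨sc, hs1, hs2', hs3⟩ := hread (m+1) (by omega) c
    simp only [Nat.add_sub_cancel] at hs2'
    rw [hs3]
    have htl := tele x idx d hx c sc m hs2'
    have hMsc : M ≤ sc + 1 := by
      apply max_le (by omega)
      omega
    calc |x m c - x sc c|
        = |∑ τ ∈ Finset.Icc (sc+1) m, (if c = idx τ then d τ else 0)| := by rw [htl]
      _ ≤ ∑ τ ∈ Finset.Icc (sc+1) m, |if c = idx τ then d τ else 0| :=
          Finset.abs_sum_le_sum_abs _ _
      _ ≤ ∑ τ ∈ Finset.Icc (sc+1) m, (if c = idx τ then |d τ| else 0) := by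
          apply Finset.sum_le_sum
          intro i _
          split <;> simp
      _ ≤ ∑ τ ∈ T, (if c = idx τ then |d τ| else 0) := by
          apply Finset.sum_le_sum_of_subset_of_nonneg
            (Finset.Icc_subset_Icc hMsc le_rfl)
          intro i _ _
          split
          · exact abs_nonneg _
          · exact le_refl 0
  have hEsum : ∑ c, |x m c - xtilde (m+1) c| ≤ S := by
    calc ∑ c, |x m c - xtilde (m+1) c|
        ≤ ∑ c, ∑ τ ∈ T, (if c = idx τ then |d τ| else 0) :=
          Finset.sum_le_sum fun c _ => hEc c
      _ = ∑ τ ∈ T, ∑ c, (if c = idx τ then |d τ| else 0) := Finset.sum_comm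
      _ = S := by
          rw [hS]
          apply Finset.sum_congr rfl
          intro τ _
          rw [Finset.sum_ite_eq' Finset.univ (idx τ) (fun _ => |d τ|)]
          simp
  have hB : |grad f (x m) k - gtilde (m+1)| ≤ Lmax * S := by
    rw [hg (m+1) (by omega), ← hk]
    calc |grad f (x m) k - grad f (xtilde (m+1)) k|
        ≤ Lmax * ∑ c, |x m c - xtilde (m+1) c| := grad_err hL hLmax_ub _ _ _
      _ ≤ Lmax * S := mul_le_mul_of_nonneg_left hEsum hLmax_pos.le
  -- Step C : descent lemma for f
  have hC : f (x (m+1)) ≤ f (x m) + grad f (x m) k * D + 3/4 * Lmax * D^2 := by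
    rw [hxt]
    refine le_trans (quad_bound hf hfc k (hL k k) (x m) D) ?_
    nlinarith [hLmax_ub k k, sq_nonneg D]
  -- Step D : proximal step bound for Ψ
  have hDps : Ψ k (x m k + D) - Ψ k (x m k) ≤ -(gtilde (m+1) * D) - Γ/2 * D^2 := by
    have h0 := hd (m+1) (by omega) (Set.mem_univ (0:ℝ))
    simp only [Nat.add_sub_cancel, ← hk, ← hDdef] at h0
    simp only [W, mul_zero, neg_zero, zero_pow, add_zero, sub_self] at h0
    norm_num at h0
    linarith [h0]
  -- Step E : sum of Ψ changes only at k
  have hΨsum : ∑ c, Ψ c (x (m+1) c)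
      = (∑ c, Ψ c (x m c)) + (Ψ k (x m k + D) - Ψ k (x m k)) := by
    have h1 : ∑ c, (Ψ c (x (m+1) c) - Ψ c (x m c)) = Ψ k (x m k + D) - Ψ k (x m k) := by
      rw [Finset.sum_eq_single k]
      · rw [hxt]; simp
      · intro b _ hb
        rw [hxt]
        simp [Pi.single_eq_of_ne hb]
      · intro h; exact absurd (Finset.mem_univ k) h
    rw [Finset.sum_sub_distrib] at h1
    linarith
  -- Step F : AM-GM estimates
  have hc4 : Lmax / 4 ≤ Γ/(16*q) := by
    rw [div_le_div_iff₀ (by norm_num) (by positivity)]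
    nlinarith
  have hper : ∀ τ ∈ T, Lmax * |d τ| * |D| ≤ Γ/(16*q) * d τ^2 + Lmax * D^2 := by
    intro τ _
    have k1 : Lmax * |d τ| * |D| ≤ Lmax/4 * |d τ|^2 + Lmax * |D|^2 := by
      nlinarith [mul_nonneg hLmax_pos.le (sq_nonneg (|d τ| - 2*|D|))]
    have k2 : Lmax/4 * |d τ|^2 ≤ Γ/(16*q) * |d τ|^2 :=
      mul_le_mul_of_nonneg_right hc4 (sq_nonneg _)
    calc Lmax * |d τ| * |D| ≤ Γ/(16*q) * |d τ|^2 + Lmax * |D|^2 := by linarith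
      _ = Γ/(16*q) * d τ^2 + Lmax * D^2 := by rw [sq_abs, sq_abs]
  have hsumF : Lmax * S * |D| ≤ Γ/(16*q) * s2 + Γ/4 * D^2 := by
    have h1 : ∑ τ ∈ T, Lmax * |d τ| * |D|
        ≤ ∑ τ ∈ T, (Γ/(16*q) * d τ^2 + Lmax * D^2) := Finset.sum_le_sum hper
    have h2 : Lmax * S * |D| = ∑ τ ∈ T, Lmax * |d τ| * |D| := by
      rw [hS, Finset.mul_sum, Finset.sum_mul]
    have h3 : ∑ τ ∈ T, (Γ/(16*q) * d τ^2 + Lmax * D^2)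
        = Γ/(16*q) * s2 + (T.card : ℝ) * (Lmax * D^2) := by
      rw [Finset.sum_add_distrib, hs2, Finset.mul_sum, Finset.sum_const, nsmul_eq_mul]
    have h4 : (T.card : ℝ) * (Lmax * D^2) ≤ Γ/4 * D^2 := by
      have hcl : (T.card : ℝ) * Lmax ≤ (q : ℝ) * Lmax :=
        mul_le_mul_of_nonneg_right hcardT hLmax_pos.le
      nlinarith [sq_nonneg D]
    rw [h2]
    linarith
  have habsD : (grad f (x m) k - gtilde (m+1)) * D ≤ Lmax * S * |D| := by
    calc (grad f (x m) k - gtilde (m+1)) * D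
        ≤ |(grad f (x m) k - gtilde (m+1)) * D| := le_abs_self _
      _ = |grad f (x m) k - gtilde (m+1)| * |D| := abs_mul _ _
      _ ≤ Lmax * S * |D| := mul_le_mul_of_nonneg_right hB (abs_nonneg D)
  have h34 : 3/4 * Lmax * D^2 ≤ 3/16 * Γ * D^2 := by nlinarith [sq_nonneg D]
  -- final combination
  rw [hH (m+1), hH m, hF (x (m+1)), hF (x m)]
  linarith [hC, hDps, hΨsum, habsD, hsumF, cA, h34]
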